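/- For every d ≥ 2 and every real number c > d, there exists a linear map Φ : ℂ^{d×d} → ℂ^{d×d} that is 2-positive and trace-preserving and satisfies tr(Φ) > c·min Re σ(Φ) + (d² − c). In other words, the constant d in the bound tr(Φ) ≤ d·min Re σ(Φ) + (d² − d) cannot be replaced by any larger constant c. -/

import Mathlib

open Matrix
open scoped ComplexOrder

/-- A linear map on `d × d` complex matrices is *positive* if it sends positive semidefinite
matrices to positive semidefinite matrices. -/
def IsPosMap {d : ℕ} (Φ : Matrix (Fin d) (Fin d) ℂ → Matrix (Fin d) (Fin d) ℂ) : Prop :=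
  ∀ A : Matrix (Fin d) (Fin d) ℂ, A.PosSemidef → (Φ A).PosSemidef

/-- A map on `d × d` complex matrices is *2-positive* if it sends every positive semidefinite
`2d × 2d` block matrix `[[A, B], [C, D]]` to a positive semidefinite block matrix
`[[Φ A, Φ B], [Φ C, Φ D]]`. -/
def IsTwoPos {d : ℕ} (Φ : Matrix (Fin d) (Fin d) ℂ → Matrix (Fin d) (Fin d) ℂ) : Prop :=
  ∀ A B C D : Matrix (Fin d) (Fin d) ℂ,
    (Matrix.fromBlocks A B C D).PosSemidef →
    (Matrix.fromBlocks (Φ A) (Φ B) (Φ C) (Φ D)).PosSemidef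

/-- A map on matrices is *trace-preserving* if `tr (Φ X) = tr X` for all `X`. -/
def IsTracePreserving {d : ℕ} (Φ : Matrix (Fin d) (Fin d) ℂ → Matrix (Fin d) (Fin d) ℂ) : Prop :=
  ∀ X : Matrix (Fin d) (Fin d) ℂ, (Φ X).trace = X.trace

/-- The constant d in the bound tr(Φ) ≤ d·min Re σ(Φ) + (d² − d) is optimal: for every c > d
there is a 2-positive trace-preserving map violating the bound with c in place of d. -/
noncomputable def phaseConj {d : ℕ} (u : Fin d → ℂ) : Module.End ℂ (Matrix (Fin d) (Fin d) ℂ) where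
  toFun X := Matrix.of fun i j => u i * star (u j) * X i j
  map_add' X Y := by ext i j; simp [Matrix.add_apply]; ring
  map_smul' r X := by ext i j; simp [Matrix.smul_apply]; ring

lemma phaseConj_apply {d : ℕ} (u : Fin d → ℂ) (X : Matrix (Fin d) (Fin d) ℂ) (i j : Fin d) :
    phaseConj u X i j = u i * star (u j) * X i j := rfl

lemma schur_psd {n : Type*} [Fintype n] [DecidableEq n] (v : n → ℂ) {M : Matrix n n ℂ}
    (hM : M.PosSemidef) :
    (Matrix.of fun i j => v i * star (v j) * M i j).PosSemidef := by
  have h : (Matrix.of fun i j => v i * star (v j) * M i j)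
      = Matrix.diagonal v * M * (Matrix.diagonal v)ᴴ := by
    ext i j
    rw [Matrix.diagonal_conjTranspose, Matrix.mul_diagonal, Matrix.diagonal_mul]
    simp only [Matrix.of_apply, Pi.star_apply]
    ring
  rw [h]; exact hM.mul_mul_conjTranspose_same _

lemma phaseConj_twoPos {d : ℕ} (u : Fin d → ℂ) : IsTwoPos ⇑(phaseConj u) := by
  intro A B C D h
  have key : Matrix.fromBlocks (phaseConj u A) (phaseConj u B) (phaseConj u C) (phaseConj u D)
      = Matrix.of fun i j => Sum.elim u u i * star (Sum.elim u u j)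
          * (Matrix.fromBlocks A B C D) i j := by
    ext i j
    rcases i with i | i <;> rcases j with j | j <;>
      simp [Matrix.fromBlocks, phaseConj_apply]
  rw [key]
  exact schur_psd _ h

lemma phaseConj_tp {d : ℕ} (u : Fin d → ℂ) (hu : ∀ i, u i * star (u i) = 1) :
    IsTracePreserving ⇑(phaseConj u) := by
  intro X
  unfold Matrix.trace
  refine Finset.sum_congr rfl fun i _ => ?_
  show u i * star (u i) * X i i = X i i
  rw [hu i, one_mul]

lemma phaseConj_basis {d : ℕ} (u : Fin d → ℂ) (p : Fin d × Fin d) :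
    phaseConj u (Matrix.stdBasis ℂ (Fin d) (Fin d) p)
      = (u p.1 * star (u p.2)) • Matrix.stdBasis ℂ (Fin d) (Fin d) p := by
  obtain ⟨i, j⟩ := p
  rw [Matrix.stdBasis_eq_single]
  ext i' j'
  by_cases h1 : i = i' <;> by_cases h2 : j = j' <;>
    simp [phaseConj_apply, Matrix.single, Matrix.smul_apply, h1, h2]

lemma phaseConj_trace {d : ℕ} (u : Fin d → ℂ) :
    LinearMap.trace ℂ (Matrix (Fin d) (Fin d) ℂ) (phaseConj u)
      = (∑ i, u i) * star (∑ i, u i) := by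
  rw [LinearMap.trace_eq_matrix_trace ℂ (Matrix.stdBasis ℂ (Fin d) (Fin d)) (phaseConj u)]
  have h : ∀ p : Fin d × Fin d,
      (LinearMap.toMatrix (Matrix.stdBasis ℂ (Fin d) (Fin d)) (Matrix.stdBasis ℂ (Fin d) (Fin d))
        (phaseConj u)) p p = u p.1 * star (u p.2) := by
    intro p
    rw [LinearMap.toMatrix_apply, phaseConj_basis]
    simp [Module.Basis.repr_self]
  rw [Matrix.trace]
  simp only [Matrix.diag_apply, h]
  rw [Fintype.sum_prod_type, Finset.sum_mul]
  refine Finset.sum_congr rfl fun i _ => ?_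
  rw [star_sum, Finset.mul_sum]

lemma phaseConj_hasEigen {d : ℕ} (u : Fin d → ℂ) (p : Fin d × Fin d) :
    u p.1 * star (u p.2) ∈ spectrum ℂ (phaseConj u) := by
  rw [← Module.End.hasEigenvalue_iff_mem_spectrum]
  exact Module.End.hasEigenvalue_of_hasEigenvector
    ⟨Module.End.mem_eigenspace_iff.mpr (phaseConj_basis u p), Module.Basis.ne_zero _ _⟩

theorem exists_twoPos_tracePreserving_violating (d : ℕ) (hd : 2 ≤ d) (c : ℝ) (hc : (d : ℝ) < c) :
    ∃ Φ : Module.End ℂ (Matrix (Fin d) (Fin d) ℂ),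
      IsTwoPos ⇑Φ ∧ IsTracePreserving ⇑Φ ∧
      (LinearMap.trace ℂ (Matrix (Fin d) (Fin d) ℂ) Φ).re >
        c * sInf (Complex.re '' spectrum ℂ Φ) + ((d : ℝ) ^ 2 - c) := by
  have hd2 : (2 : ℝ) ≤ (d : ℝ) := by exact_mod_cast hd
  have hc2 : (2 : ℝ) < c := lt_of_le_of_lt hd2 hc
  set e : ℝ := min (1/2) ((c - d) / (c - 2)) with he_def
  have he0 : 0 < e := lt_min (by norm_num) (div_pos (by linarith) (by linarith))
  have heh : e ≤ 1/2 := min_le_left _ _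
  have hecd : e * (c - 2) ≤ c - d := by
    have h := min_le_right (1/2 : ℝ) ((c - d) / (c - 2))
    rw [le_div_iff₀ (by linarith : (0:ℝ) < c - 2)] at h
    calc e * (c - 2) ≤ (c - d) / (c - 2) * (c - 2) := by
          apply mul_le_mul_of_nonneg_right (min_le_right _ _); linarith
      _ = c - d := div_mul_cancel₀ _ (by linarith : (c-2:ℝ) ≠ 0)
  set a : ℝ := 1 - e with ha_def
  have hah : 1/2 ≤ a := by simp only [ha_def]; linarith
  have ha1 : a < 1 := by simp only [ha_def]; linarith
  set b : ℝ := Real.sqrt (1 - a^2) with hb_def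
  have hb2 : b^2 = 1 - a^2 := Real.sq_sqrt (by nlinarith)
  set z : ℂ := (a : ℂ) + (b : ℂ) * Complex.I with hz_def
  have hre : z.re = a := by simp [hz_def]
  have him : z.im = b := by simp [hz_def]
  have hzz : z * star z = 1 := by
    rw [Complex.star_def, Complex.mul_conj]
    have hn : Complex.normSq z = 1 := by
      rw [Complex.normSq_apply, hre, him]; nlinarith
    rw [hn]; simp
  set i0 : Fin d := ⟨0, by omega⟩ with hi0
  set i1 : Fin d := ⟨1, by omega⟩ with hi1
  have hne : i0 ≠ i1 := by simp [hi0, hi1, Fin.ext_iff]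
  set u : Fin d → ℂ := fun j => if j = i0 then z else if j = i1 then star z else 1 with hu_def
  have hu0 : u i0 = z := by simp [hu_def]
  have hu1 : u i1 = star z := by simp [hu_def, hne.symm]
  have hunit : ∀ i, u i * star (u i) = 1 := by
    intro i
    simp only [hu_def]
    split_ifs
    · exact hzz
    · rw [star_star, mul_comm]; exact hzz
    · simp
  refine ⟨phaseConj u, phaseConj_twoPos u, phaseConj_tp u hunit, ?_⟩
  -- eigenvalue z * z
  have hμ : u i0 * star (u i1) = z * z := by rw [hu0, hu1, star_star]
  have hμre : (z * z).re = 2 * a^2 - 1 := by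
    rw [Complex.mul_re, hre, him]; nlinarith
  have hspec : z * z ∈ spectrum ℂ (phaseConj u) := by
    have := phaseConj_hasEigen u (i0, i1)
    rwa [hμ] at this
  have hmem : 2 * a^2 - 1 ∈ Complex.re '' spectrum ℂ (phaseConj u) :=
    ⟨z * z, hspec, hμre⟩
  have hbdd : BddBelow (Complex.re '' spectrum ℂ (phaseConj u)) :=
    ((Module.End.finite_spectrum (phaseConj u)).image _).bddBelow
  have hsinf : sInf (Complex.re '' spectrum ℂ (phaseConj u)) ≤ 2 * a^2 - 1 :=
    csInf_le hbdd hmem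
  -- trace
  have hS : (∑ i, u i) = z + star z + ((d : ℂ) - 2) := by
    have hptw : ∀ j : Fin d, u j
        = 1 + (if j = i0 then z - 1 else 0) + (if j = i1 then star z - 1 else 0) := by
      intro j
      simp only [hu_def]
      split_ifs with h1 h2
      · exact absurd (h1 ▸ h2) hne
      · ring
      · ring
      · ring
    rw [Finset.sum_congr rfl (fun j _ => hptw j)]
    rw [Finset.sum_add_distrib, Finset.sum_add_distrib]
    simp [Finset.sum_ite_eq', Finset.card_univ]
    ring
  have htrre : (LinearMap.trace ℂ (Matrix (Fin d) (Fin d) ℂ) (phaseConj u)).re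
      = (2 * a + (d : ℝ) - 2)^2 := by
    rw [phaseConj_trace u, Complex.star_def, Complex.mul_conj, Complex.ofReal_re,
      Complex.normSq_apply, hS]
    have h1 : (z + star z + ((d : ℂ) - 2)).re = 2 * a + (d : ℝ) - 2 := by
      simp [Complex.add_re, Complex.sub_re, hre, Complex.conj_re]
      ring
    have h2 : (z + star z + ((d : ℂ) - 2)).im = 0 := by
      simp [Complex.add_im, Complex.sub_im, him, Complex.conj_im]
    rw [h1, h2]; ring
  rw [htrre]
  have hkey : (2 * a + (d : ℝ) - 2)^2 > c * (2 * a^2 - 1) + ((d : ℝ)^2 - c) := by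
    have hecd' : (c - 2) * e ≤ c - (d:ℝ) := by rw [mul_comm]; exact hecd
    have hfac : (2*a + (d:ℝ) - 2)^2 - (c*(2*a^2-1) + ((d:ℝ)^2 - c))
        = e * (4*(c-(d:ℝ)) - 2*((c-2)*e)) := by rw [ha_def]; ring
    have hpos : 0 < 4*(c-(d:ℝ)) - 2*((c-2)*e) := by linarith
    nlinarith [mul_pos he0 hpos]
  calc c * sInf (Complex.re '' spectrum ℂ (phaseConj u)) + ((d:ℝ)^2 - c)
      ≤ c * (2 * a^2 - 1) + ((d:ℝ)^2 - c) := by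
        have := mul_le_mul_of_nonneg_left hsinf (by linarith : (0:ℝ) ≤ c)
        linarith
    _ < (2 * a + (d : ℝ) - 2)^2 := hkey
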